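/- There exists ε > 0 such that for all f ∈ (0, ε): E(R^(M)(f,·)) = Σ_{n=1}^N (Σ_{ℓ=0}^M R_n^{(ℓ,M,N)})·log(1 + f·t_n/t̂), where R_n^{(0,M,N)} := 0 and, for ℓ ∈ {1,…,M}, R_n^{(ℓ,M,N)} := Σ P({ω})·#{i ≤ ℓ : ω_i = n} ≥ 0, the sum running over all ω ∈ Ω^(M) satisfying Σ_{j=k}^ℓ t_{ω_j} > 0 for every k = 1,…,ℓ and Σ_{j=ℓ+1}^{k̃} t_{ω_j} ≤ 0 for every k̃ = ℓ+1,…,M. -/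

import Mathlib

open scoped Classical
open Finset Filter
open scoped Topology


private lemma my_sum_filter_split {M : ℕ} (h : Fin M → ℝ) {a b c : ℕ} (hab : a ≤ b) (hbc : b ≤ c) :
    (∑ j ∈ Finset.univ.filter (fun j : Fin M => a ≤ j.1 ∧ j.1 < b), h j)
    + (∑ j ∈ Finset.univ.filter (fun j : Fin M => b ≤ j.1 ∧ j.1 < c), h j)
    = ∑ j ∈ Finset.univ.filter (fun j : Fin M => a ≤ j.1 ∧ j.1 < c), h j := by
  rw [← Finset.sum_union]
  · apply Finset.sum_congr _ (fun _ _ => rfl)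
    ext j
    simp only [Finset.mem_union, Finset.mem_filter, Finset.mem_univ, true_and]
    omega
  · rw [Finset.disjoint_left]
    intro j hj hj'
    simp only [Finset.mem_filter, Finset.mem_univ, true_and] at hj hj'
    omega

private lemma my_logsum_pos {ι : Type*} (F : Finset ι) (c : ι → ℝ) (hs : 0 < ∑ j ∈ F, c j) :
    ∃ ε > 0, ∀ f : ℝ, 0 < f → f < ε → 0 < ∑ j ∈ F, Real.log (1 + f * c j) := by
  set g : ℝ → ℝ := fun f => ∑ j ∈ F, Real.log (1 + f * c j) with hg
  have hder : HasDerivAt g (∑ j ∈ F, c j) 0 := by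
    apply HasDerivAt.fun_sum
    intro j _
    have h1 : HasDerivAt (fun f : ℝ => 1 + f * c j) (c j) 0 := by
      simpa using ((hasDerivAt_id (0 : ℝ)).mul_const (c j)).const_add 1
    have h2 := (Real.hasDerivAt_log (by norm_num : (1 : ℝ) + 0 * c j ≠ 0)).comp 0 h1
    simpa [Function.comp_def] using h2
  have hslope := hasDerivAt_iff_tendsto_slope.mp hder
  have hmono : 𝓝[>] (0 : ℝ) ≤ 𝓝[≠] (0 : ℝ) :=
    nhdsWithin_mono _ (fun x hx => ne_of_gt hx)
  have h2 : ∀ᶠ f in 𝓝[>] (0 : ℝ), 0 < slope g 0 f :=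
    (hslope.mono_left hmono).eventually (eventually_gt_nhds hs)
  rw [Filter.eventually_iff, mem_nhdsGT_iff_exists_Ioo_subset] at h2
  obtain ⟨u, hu, hsub⟩ := h2
  refine ⟨u, hu, fun f hf0 hfu => ?_⟩
  have := hsub ⟨hf0, hfu⟩
  simp only [Set.mem_setOf_eq, slope_def_field] at this
  have hg0 : g 0 = 0 := by simp [hg]
  rw [hg0] at this
  have : 0 < g f / f := by
    simpa [div_eq_mul_inv] using this
  exact (div_pos_iff.mp this).resolve_right (fun h => absurd hf0 (not_lt.mpr h.2.le)) |>.1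

private lemma my_logsum_nonpos {ι : Type*} (F : Finset ι) (c : ι → ℝ) (f : ℝ) (hf : 0 ≤ f)
    (hpos : ∀ j ∈ F, 0 < 1 + f * c j) (hs : ∑ j ∈ F, c j ≤ 0) :
    ∑ j ∈ F, Real.log (1 + f * c j) ≤ 0 := by
  calc ∑ j ∈ F, Real.log (1 + f * c j) ≤ ∑ j ∈ F, f * c j := by
        apply Finset.sum_le_sum
        intro j hj
        have := Real.log_le_sub_one_of_pos (hpos j hj)
        linarith
    _ = f * ∑ j ∈ F, c j := by rw [Finset.mul_sum]
    _ ≤ 0 := mul_nonpos_of_nonneg_of_nonpos hf hs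
private lemma first_argmax (S : ℕ → ℝ) (M : ℕ) :
    ∃ ℓ, ℓ ≤ M ∧ (∀ k < ℓ, S k < S ℓ) ∧ (∀ m, m ≤ M → S m ≤ S ℓ) := by
  induction M with
  | zero => exact ⟨0, le_refl 0, by omega, fun m hm => by rw [Nat.le_zero.mp hm]⟩
  | succ M ih =>
    obtain ⟨ℓ, hℓ, h1, h2⟩ := ih
    by_cases hc : S (M+1) ≤ S ℓ
    · refine ⟨ℓ, by omega, h1, fun m hm => ?_⟩
      rcases Nat.lt_succ_iff_lt_or_eq.mp (Nat.lt_succ_of_le hm) with h | h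
      · exact h2 m (by omega)
      · rw [h]; exact hc
    · push_neg at hc
      refine ⟨M+1, le_refl _, fun k hk => lt_of_le_of_lt (h2 k (by omega)) hc, fun m hm => ?_⟩
      rcases Nat.lt_succ_iff_lt_or_eq.mp (Nat.lt_succ_of_le hm) with h | h
      · exact le_of_lt (lt_of_le_of_lt (h2 m (by omega)) hc)
      · rw [h]

private lemma exists_cnd {N M : ℕ} (t : Fin N → ℝ) (ω : Fin M → Fin N) :
    ∃ ℓ, ℓ ≤ M ∧
      (∀ k < ℓ, 0 < ∑ j ∈ Finset.univ.filter (fun j : Fin M => k ≤ j.1 ∧ j.1 < ℓ), t (ω j)) ∧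
      (∀ k, ℓ ≤ k → k < M →
        (∑ j ∈ Finset.univ.filter (fun j : Fin M => ℓ ≤ j.1 ∧ j.1 ≤ k), t (ω j)) ≤ 0) := by
  classical
  set S : ℕ → ℝ := fun m =>
    ∑ j ∈ Finset.univ.filter (fun j : Fin M => 0 ≤ j.1 ∧ j.1 < m), t (ω j) with hS
  obtain ⟨ℓ, hℓM, h1, h2⟩ := first_argmax S M
  refine ⟨ℓ, hℓM, ?_, ?_⟩
  · intro k hk
    have hlt : S k < S ℓ := h1 k hk
    have hsp : S k + (∑ j ∈ Finset.univ.filter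
        (fun j : Fin M => k ≤ j.1 ∧ j.1 < ℓ), t (ω j)) = S ℓ := by
      simp only [hS]
      exact my_sum_filter_split (fun j : Fin M => t (ω j)) (Nat.zero_le k) hk.le
    linarith
  · intro k hk1 hk2
    have hle : S (k+1) ≤ S ℓ := h2 (k+1) (by omega)
    have heq : Finset.univ.filter (fun j : Fin M => ℓ ≤ j.1 ∧ j.1 ≤ k)
        = Finset.univ.filter (fun j : Fin M => ℓ ≤ j.1 ∧ j.1 < k+1) := by
      ext j; simp only [Finset.mem_filter, Finset.mem_univ, true_and]; omega
    rw [heq]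
    have hsp : S ℓ + (∑ j ∈ Finset.univ.filter
        (fun j : Fin M => ℓ ≤ j.1 ∧ j.1 < k+1), t (ω j)) = S (k+1) := by
      simp only [hS]
      exact my_sum_filter_split (fun j : Fin M => t (ω j)) (Nat.zero_le ℓ) (by omega)
    linarith

private lemma cnd_unique {N M : ℕ} (t : Fin N → ℝ) (ω : Fin M → Fin N) {ℓ ℓ' : ℕ}
    (hℓ : ℓ ≤ M) (hℓ' : ℓ' ≤ M)
    (h1 : ∀ k < ℓ, 0 < ∑ j ∈ Finset.univ.filter (fun j : Fin M => k ≤ j.1 ∧ j.1 < ℓ), t (ω j))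
    (h2 : ∀ k, ℓ ≤ k → k < M →
      (∑ j ∈ Finset.univ.filter (fun j : Fin M => ℓ ≤ j.1 ∧ j.1 ≤ k), t (ω j)) ≤ 0)
    (h1' : ∀ k < ℓ', 0 < ∑ j ∈ Finset.univ.filter (fun j : Fin M => k ≤ j.1 ∧ j.1 < ℓ'), t (ω j))
    (h2' : ∀ k, ℓ' ≤ k → k < M →
      (∑ j ∈ Finset.univ.filter (fun j : Fin M => ℓ' ≤ j.1 ∧ j.1 ≤ k), t (ω j)) ≤ 0) :
    ℓ = ℓ' := by
  by_contra hne
  rcases Nat.lt_or_ge ℓ ℓ' with h | h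
  · have ha := h1' ℓ h
    have hb := h2 (ℓ' - 1) (by omega) (by omega)
    have heq : Finset.univ.filter (fun j : Fin M => ℓ ≤ j.1 ∧ j.1 ≤ ℓ' - 1)
        = Finset.univ.filter (fun j : Fin M => ℓ ≤ j.1 ∧ j.1 < ℓ') := by
      ext j; simp only [Finset.mem_filter, Finset.mem_univ, true_and]; omega
    rw [heq] at hb; linarith
  · have hlt : ℓ' < ℓ := by omega
    have ha := h1 ℓ' hlt
    have hb := h2' (ℓ - 1) (by omega) (by omega)
    have heq : Finset.univ.filter (fun j : Fin M => ℓ' ≤ j.1 ∧ j.1 ≤ ℓ - 1)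
        = Finset.univ.filter (fun j : Fin M => ℓ' ≤ j.1 ∧ j.1 < ℓ) := by
      ext j; simp only [Finset.mem_filter, Finset.mem_univ, true_and]; omega
    rw [heq] at hb; linarith

private lemma count_sum {N M : ℕ} (ω : Fin M → Fin N) (ℓ : ℕ) (g : Fin N → ℝ) :
    (∑ n, ((Finset.univ.filter (fun i : Fin M => i.1 < ℓ ∧ ω i = n)).card : ℝ) * g n)
      = ∑ j ∈ Finset.univ.filter (fun j : Fin M => j.1 < ℓ), g (ω j) := by
  classical
  rw [← Finset.sum_fiberwise_of_maps_to (fun j _ => Finset.mem_univ (ω j))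
    (fun j => g (ω j))]
  apply Finset.sum_congr rfl
  intro n _
  rw [Finset.filter_filter]
  rw [Finset.sum_congr rfl (fun j hj => by
    rw [(Finset.mem_filter.mp hj).2.2] : ∀ j ∈ _, g (ω j) = g n)]
  rw [Finset.sum_const, nsmul_eq_mul]
private lemma core_sup {M : ℕ} (hM : 1 ≤ M) (x : Fin M → ℝ) (hx : ∀ j, 0 < x j)
    {ℓ : ℕ} (hℓM : ℓ ≤ M)
    (hpos : ∀ k < ℓ, 0 < ∑ j ∈ Finset.univ.filter
      (fun j : Fin M => k ≤ j.1 ∧ j.1 < ℓ), Real.log (x j))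
    (hnonpos : ∀ m, ℓ < m → m ≤ M →
      (∑ j ∈ Finset.univ.filter (fun j : Fin M => ℓ ≤ j.1 ∧ j.1 < m), Real.log (x j)) ≤ 0) :
    Real.log ((Finset.univ : Finset (Fin M)).sup'
        (Finset.univ_nonempty_iff.mpr (Fin.pos_iff_nonempty.mp hM))
        (fun ℓ' => max 1 (∏ j ∈ Finset.univ.filter (fun j : Fin M => j ≤ ℓ'), x j)))
      = ∑ j ∈ Finset.univ.filter (fun j : Fin M => j.1 < ℓ), Real.log (x j) := by
  classical
  set L : ℕ → ℝ := fun m =>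
    ∑ j ∈ Finset.univ.filter (fun j : Fin M => j.1 < m), Real.log (x j) with hL
  set Q : ℕ → ℝ := fun m =>
    ∏ j ∈ Finset.univ.filter (fun j : Fin M => j.1 < m), x j with hQ
  have hQpos : ∀ m, 0 < Q m := fun m => Finset.prod_pos (fun j _ => hx j)
  have hlogQ : ∀ m, Real.log (Q m) = L m := fun m =>
    Real.log_prod (fun j _ => (hx j).ne')
  have hzero : ∀ m, Finset.univ.filter (fun j : Fin M => j.1 < m)
      = Finset.univ.filter (fun j : Fin M => 0 ≤ j.1 ∧ j.1 < m) := by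
    intro m; ext j; simp
  have hsplit : ∀ a b : ℕ, a ≤ b → L a + (∑ j ∈ Finset.univ.filter
      (fun j : Fin M => a ≤ j.1 ∧ j.1 < b), Real.log (x j)) = L b := by
    intro a b hab
    simp only [hL]
    rw [hzero a, hzero b]
    exact my_sum_filter_split _ (Nat.zero_le a) hab
  have hL00 : L 0 = 0 := by
    simp only [hL]
    have : Finset.univ.filter (fun j : Fin M => j.1 < 0) = ∅ := by
      ext j; simp
    rw [this, Finset.sum_empty]
  have hLle : ∀ m, m ≤ M → L m ≤ L ℓ := by
    intro m hmM
    rcases lt_trichotomy m ℓ with h | h | h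
    · have hs := hsplit m ℓ h.le
      have hp := hpos m h
      linarith
    · exact le_of_eq (congrArg L h)
    · have hs := hsplit ℓ m h.le
      have hp := hnonpos m h hmM
      linarith
  have hL0 : 0 ≤ L ℓ := by
    rcases Nat.eq_zero_or_pos ℓ with h | h
    · rw [h, hL00]
    · have hs := hsplit 0 ℓ (Nat.zero_le ℓ)
      have hp := hpos 0 h
      linarith
  have hfun : ∀ ℓ' : Fin M, (Finset.univ.filter (fun j : Fin M => j ≤ ℓ'))
      = Finset.univ.filter (fun j : Fin M => j.1 < ℓ'.1 + 1) := by
    intro ℓ'; ext j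
    simp only [Finset.mem_filter, Finset.mem_univ, true_and, Fin.le_def]
    omega
  have hsup : ((Finset.univ : Finset (Fin M)).sup'
        (Finset.univ_nonempty_iff.mpr (Fin.pos_iff_nonempty.mp hM))
        (fun ℓ' => max 1 (∏ j ∈ Finset.univ.filter (fun j : Fin M => j ≤ ℓ'), x j)))
      = (Finset.univ : Finset (Fin M)).sup'
        (Finset.univ_nonempty_iff.mpr (Fin.pos_iff_nonempty.mp hM))
        (fun ℓ' => max 1 (Q (ℓ'.1 + 1))) := by
    apply Finset.sup'_congr _ rfl
    intro ℓ' _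
    rw [hfun ℓ']
  rw [hsup]
  rcases Nat.eq_zero_or_pos ℓ with h0 | h1
  · subst h0
    have hone : ((Finset.univ : Finset (Fin M)).sup'
        (Finset.univ_nonempty_iff.mpr (Fin.pos_iff_nonempty.mp hM))
        (fun ℓ' => max 1 (Q (ℓ'.1 + 1)))) = 1 := by
      apply le_antisymm
      · apply Finset.sup'_le
        intro ℓ' _
        apply max_le le_rfl
        have hlog := hLle (ℓ'.1+1) (by omega)
        rw [hL00] at hlog
        rw [← hlogQ (ℓ'.1+1)] at hlog
        exact (Real.log_nonpos_iff (hQpos _).le).mp hlog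
      · exact le_trans (le_max_left 1 _)
          (Finset.le_sup' (fun ℓ' : Fin M => max 1 (Q (ℓ'.1 + 1)))
            (Finset.mem_univ (⟨0, hM⟩ : Fin M)))
    rw [hone, Real.log_one, ← hL00, hL]
  · have hQ1 : 1 ≤ Q ℓ := by
      by_contra hlt
      push_neg at hlt
      have := Real.log_neg (hQpos ℓ) hlt
      rw [hlogQ] at this; linarith
    have hQsup : ((Finset.univ : Finset (Fin M)).sup'
        (Finset.univ_nonempty_iff.mpr (Fin.pos_iff_nonempty.mp hM))
        (fun ℓ' => max 1 (Q (ℓ'.1 + 1)))) = Q ℓ := by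
      apply le_antisymm
      · apply Finset.sup'_le
        intro ℓ' _
        apply max_le hQ1
        have hlog := hLle (ℓ'.1+1) (by omega)
        rw [← hlogQ (ℓ'.1+1), ← hlogQ ℓ] at hlog
        exact (Real.log_le_log_iff (hQpos _) (hQpos _)).mp hlog
      · have key := Finset.le_sup' (fun ℓ' : Fin M => max 1 (Q (ℓ'.1 + 1)))
          (Finset.mem_univ (⟨ℓ - 1, by omega⟩ : Fin M))
        simp only at key
        rw [show ℓ - 1 + 1 = ℓ by omega] at key
        exact le_trans (le_max_right 1 (Q ℓ)) key
    rw [hQsup, hlogQ]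

theorem stmt_13 (N : ℕ) (hN : 1 ≤ N) (t : Fin N → ℝ) (ht : ∀ i, t i ≠ 0)
    (hneg : ∃ i, t i < 0) (that : ℝ)
    (hthat : IsGreatest {x : ℝ | ∃ i, t i < 0 ∧ x = |t i|} that)
    (hthat_pos : 0 < that)
    (p : Fin N → ℝ) (hp : ∀ i, 0 < p i) (hpsum : ∑ i, p i = 1)
    (M : ℕ) (hM : 1 ≤ M)
    (R : Fin N → ℕ → ℝ)
    (hR : ∀ n : Fin N, ∀ ℓ, 1 ≤ ℓ → ℓ ≤ M → R n ℓ =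
      ∑ ω ∈ Finset.univ.filter (fun ω : Fin M → Fin N =>
          (∀ k < ℓ, 0 < ∑ j ∈ Finset.univ.filter
              (fun j : Fin M => k ≤ j.1 ∧ j.1 < ℓ), t (ω j)) ∧
          (∀ k, ℓ ≤ k → k < M → (∑ j ∈ Finset.univ.filter
              (fun j : Fin M => ℓ ≤ j.1 ∧ j.1 ≤ k), t (ω j)) ≤ 0)),
        (∏ j, p (ω j)) *
          ((Finset.univ.filter (fun i : Fin M => i.1 < ℓ ∧ ω i = n)).card : ℝ))
    (hR0 : ∀ n : Fin N, R n 0 = 0) :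
    ∃ ε > 0, ∀ f : ℝ, 0 < f → f < ε →
      ∑ ω : Fin M → Fin N, (∏ j, p (ω j)) *
        Real.log ((Finset.univ : Finset (Fin M)).sup'
          (Finset.univ_nonempty_iff.mpr (Fin.pos_iff_nonempty.mp hM))
          (fun ℓ => max 1 (∏ j ∈ Finset.univ.filter (fun j : Fin M => j ≤ ℓ),
            (1 + f * t (ω j) / that))))
      = ∑ n, (∑ ℓ ∈ Finset.range (M + 1), R n ℓ) * Real.log (1 + f * t n / that) := by
  haveI hNe : Nonempty (Fin N) := ⟨⟨0, hN⟩⟩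
  -- choose the "top" index for each ω
  choose ℓs hℓs using fun ω : Fin M → Fin N => exists_cnd t ω
  -- ε construction
  have key : ∀ q : (Fin M → Fin N) × Fin (M+1) × Fin (M+1), ∃ ε > 0, ∀ f : ℝ, 0 < f → f < ε →
      0 < (∑ j ∈ Finset.univ.filter
        (fun j : Fin M => q.2.1.1 ≤ j.1 ∧ j.1 < q.2.2.1), t (q.1 j)) →
      0 < ∑ j ∈ Finset.univ.filter
        (fun j : Fin M => q.2.1.1 ≤ j.1 ∧ j.1 < q.2.2.1),
          Real.log (1 + f * t (q.1 j) / that) := by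
    rintro ⟨ω, a, b⟩
    by_cases hq : 0 < ∑ j ∈ Finset.univ.filter
        (fun j : Fin M => a.1 ≤ j.1 ∧ j.1 < b.1), t (ω j)
    · obtain ⟨ε, hε, hfε⟩ := my_logsum_pos
        (Finset.univ.filter (fun j : Fin M => a.1 ≤ j.1 ∧ j.1 < b.1))
        (fun j => t (ω j) / that)
        (by rw [← Finset.sum_div]; exact div_pos hq hthat_pos)
      refine ⟨ε, hε, fun f hf0 hfε' _ => ?_⟩
      have := hfε f hf0 hfε'
      simpa [mul_div_assoc] using this
    · exact ⟨1, one_pos, fun f _ _ h => absurd h hq⟩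
  choose εq hεq0 hεq using key
  refine ⟨min 1 (Finset.univ.inf' Finset.univ_nonempty εq),
    lt_min one_pos ((Finset.lt_inf'_iff Finset.univ_nonempty).mpr (fun q _ => hεq0 q)), ?_⟩
  intro f hf0 hfε
  have hf1 : f < 1 := lt_of_lt_of_le hfε (min_le_left _ _)
  -- positive log-sums for positive t-sums
  have hseg : ∀ (ω : Fin M → Fin N) (a b : ℕ), a ≤ M → b ≤ M →
      0 < (∑ j ∈ Finset.univ.filter (fun j : Fin M => a ≤ j.1 ∧ j.1 < b), t (ω j)) →
      0 < ∑ j ∈ Finset.univ.filter (fun j : Fin M => a ≤ j.1 ∧ j.1 < b),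
        Real.log (1 + f * t (ω j) / that) := by
    intro ω a b haM hbM hpos
    exact hεq (ω, ⟨a, by omega⟩, ⟨b, by omega⟩) f hf0
      (lt_of_lt_of_le hfε (le_trans (min_le_right _ _)
        (Finset.inf'_le _ (Finset.mem_univ _)))) hpos
  -- positivity of factors
  have hfac : ∀ i : Fin N, 0 < 1 + f * t i / that := by
    intro i
    rcases lt_or_gt_of_ne (ht i) with h | h
    · have habs : |t i| ≤ that := hthat.2 ⟨i, h, rfl⟩
      rw [abs_of_neg h] at habs
      have h5 : f * (-t i) < that := by
        have := mul_lt_mul hf1 habs (neg_pos.mpr h) zero_le_one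
        simpa using this
      have h6 : f * t i / that > -1 := by
        rw [gt_iff_lt, neg_lt, ← neg_div, ← mul_neg]
        exact (div_lt_one hthat_pos).mpr h5
      linarith
    · have := div_pos (mul_pos hf0 h) hthat_pos
      linarith
  -- core computation per ω
  have hcore : ∀ (ω : Fin M → Fin N) (ℓ : ℕ), ℓ ≤ M →
      (∀ k < ℓ, 0 < ∑ j ∈ Finset.univ.filter
        (fun j : Fin M => k ≤ j.1 ∧ j.1 < ℓ), t (ω j)) →
      (∀ k, ℓ ≤ k → k < M → (∑ j ∈ Finset.univ.filter
        (fun j : Fin M => ℓ ≤ j.1 ∧ j.1 ≤ k), t (ω j)) ≤ 0) →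
      Real.log ((Finset.univ : Finset (Fin M)).sup'
          (Finset.univ_nonempty_iff.mpr (Fin.pos_iff_nonempty.mp hM))
          (fun ℓ' => max 1 (∏ j ∈ Finset.univ.filter (fun j : Fin M => j ≤ ℓ'),
            (1 + f * t (ω j) / that))))
        = ∑ j ∈ Finset.univ.filter (fun j : Fin M => j.1 < ℓ),
            Real.log (1 + f * t (ω j) / that) := by
    intro ω ℓ hℓM hc1 hc2
    apply core_sup hM (fun j => 1 + f * t (ω j) / that) (fun j => hfac (ω j)) hℓM
    · intro k hk
      exact hseg ω k ℓ (by omega) hℓM (hc1 k hk)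
    · intro m hm1 hm2
      have hseg_le : (∑ j ∈ Finset.univ.filter
          (fun j : Fin M => ℓ ≤ j.1 ∧ j.1 < m), t (ω j)) ≤ 0 := by
        have hb := hc2 (m-1) (by omega) (by omega)
        have heq : Finset.univ.filter (fun j : Fin M => ℓ ≤ j.1 ∧ j.1 ≤ m - 1)
            = Finset.univ.filter (fun j : Fin M => ℓ ≤ j.1 ∧ j.1 < m) := by
          ext j; simp only [Finset.mem_filter, Finset.mem_univ, true_and]; omega
        rwa [heq] at hb
      have := my_logsum_nonpos
        (Finset.univ.filter (fun j : Fin M => ℓ ≤ j.1 ∧ j.1 < m))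
        (fun j => t (ω j) / that) f hf0.le
        (fun j _ => by rw [← mul_div_assoc]; exact hfac (ω j))
        (by rw [← Finset.sum_div]
            exact div_nonpos_of_nonpos_of_nonneg hseg_le hthat_pos.le)
      simpa [mul_div_assoc] using this
  -- assemble
  calc
    (∑ ω : Fin M → Fin N, (∏ j, p (ω j)) *
        Real.log ((Finset.univ : Finset (Fin M)).sup'
          (Finset.univ_nonempty_iff.mpr (Fin.pos_iff_nonempty.mp hM))
          (fun ℓ' => max 1 (∏ j ∈ Finset.univ.filter (fun j : Fin M => j ≤ ℓ'),
            (1 + f * t (ω j) / that)))))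
      = ∑ ℓ ∈ Finset.range (M + 1),
          ∑ ω ∈ Finset.univ.filter (fun ω : Fin M → Fin N => ℓs ω = ℓ),
            (∏ j, p (ω j)) *
            Real.log ((Finset.univ : Finset (Fin M)).sup'
              (Finset.univ_nonempty_iff.mpr (Fin.pos_iff_nonempty.mp hM))
              (fun ℓ' => max 1 (∏ j ∈ Finset.univ.filter (fun j : Fin M => j ≤ ℓ'),
                (1 + f * t (ω j) / that)))) :=
        (Finset.sum_fiberwise_of_maps_to
          (fun ω _ => Finset.mem_range.mpr (Nat.lt_succ_of_le (hℓs ω).1)) _).symm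
    _ = ∑ ℓ ∈ Finset.range (M + 1), ∑ n, R n ℓ * Real.log (1 + f * t n / that) := by
        apply Finset.sum_congr rfl
        intro ℓ hℓmem
        have hℓM : ℓ ≤ M := by
          have := Finset.mem_range.mp hℓmem; omega
        rcases Nat.eq_zero_or_pos ℓ with h0 | h1
        · subst h0
          have hz : (∑ n, R n 0 * Real.log (1 + f * t n / that)) = 0 :=
            Finset.sum_eq_zero (fun n _ => by rw [hR0 n, zero_mul])
          rw [hz]
          apply Finset.sum_eq_zero
          intro ω hω
          have h0 : ℓs ω = 0 := (Finset.mem_filter.mp hω).2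
          have hc := (hℓs ω).2
          rw [h0] at hc
          rw [hcore ω 0 (Nat.zero_le M) hc.1 hc.2]
          have hemp : Finset.univ.filter (fun j : Fin M => j.1 < 0) = ∅ := by
            ext j; simp
          rw [hemp, Finset.sum_empty, mul_zero]
        · have hset : Finset.univ.filter (fun ω : Fin M → Fin N => ℓs ω = ℓ)
              = Finset.univ.filter (fun ω : Fin M → Fin N =>
                (∀ k < ℓ, 0 < ∑ j ∈ Finset.univ.filter
                    (fun j : Fin M => k ≤ j.1 ∧ j.1 < ℓ), t (ω j)) ∧
                (∀ k, ℓ ≤ k → k < M → (∑ j ∈ Finset.univ.filter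
                    (fun j : Fin M => ℓ ≤ j.1 ∧ j.1 ≤ k), t (ω j)) ≤ 0)) := by
            ext ω
            simp only [Finset.mem_filter, Finset.mem_univ, true_and]
            constructor
            · rintro rfl
              exact (hℓs ω).2
            · intro h
              exact cnd_unique t ω (hℓs ω).1 hℓM (hℓs ω).2.1 (hℓs ω).2.2 h.1 h.2
          rw [hset]
          calc
            (∑ ω ∈ Finset.univ.filter (fun ω : Fin M → Fin N =>
                (∀ k < ℓ, 0 < ∑ j ∈ Finset.univ.filter
                    (fun j : Fin M => k ≤ j.1 ∧ j.1 < ℓ), t (ω j)) ∧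
                (∀ k, ℓ ≤ k → k < M → (∑ j ∈ Finset.univ.filter
                    (fun j : Fin M => ℓ ≤ j.1 ∧ j.1 ≤ k), t (ω j)) ≤ 0)),
              (∏ j, p (ω j)) *
              Real.log ((Finset.univ : Finset (Fin M)).sup'
                (Finset.univ_nonempty_iff.mpr (Fin.pos_iff_nonempty.mp hM))
                (fun ℓ' => max 1 (∏ j ∈ Finset.univ.filter (fun j : Fin M => j ≤ ℓ'),
                  (1 + f * t (ω j) / that)))))
              = ∑ ω ∈ Finset.univ.filter (fun ω : Fin M → Fin N =>
                  (∀ k < ℓ, 0 < ∑ j ∈ Finset.univ.filter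
                      (fun j : Fin M => k ≤ j.1 ∧ j.1 < ℓ), t (ω j)) ∧
                  (∀ k, ℓ ≤ k → k < M → (∑ j ∈ Finset.univ.filter
                      (fun j : Fin M => ℓ ≤ j.1 ∧ j.1 ≤ k), t (ω j)) ≤ 0)),
                ∑ n, ((∏ j, p (ω j)) *
                  (((Finset.univ.filter (fun i : Fin M => i.1 < ℓ ∧ ω i = n)).card : ℝ) *
                    Real.log (1 + f * t n / that))) := by
                apply Finset.sum_congr rfl
                intro ω hω
                have hmem := (Finset.mem_filter.mp hω).2
                rw [hcore ω ℓ hℓM hmem.1 hmem.2, ← count_sum ω ℓ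
                  (fun n => Real.log (1 + f * t n / that)), Finset.mul_sum]
            _ = ∑ n, ∑ ω ∈ Finset.univ.filter (fun ω : Fin M → Fin N =>
                  (∀ k < ℓ, 0 < ∑ j ∈ Finset.univ.filter
                      (fun j : Fin M => k ≤ j.1 ∧ j.1 < ℓ), t (ω j)) ∧
                  (∀ k, ℓ ≤ k → k < M → (∑ j ∈ Finset.univ.filter
                      (fun j : Fin M => ℓ ≤ j.1 ∧ j.1 ≤ k), t (ω j)) ≤ 0)),
                ((∏ j, p (ω j)) *
                  ((Finset.univ.filter (fun i : Fin M => i.1 < ℓ ∧ ω i = n)).card : ℝ)) *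
                  Real.log (1 + f * t n / that) := by
                rw [Finset.sum_comm]
                exact Finset.sum_congr rfl (fun n _ =>
                  Finset.sum_congr rfl (fun ω _ => by ring))
            _ = ∑ n, R n ℓ * Real.log (1 + f * t n / that) := by
                apply Finset.sum_congr rfl
                intro n _
                rw [hR n ℓ h1 hℓM, Finset.sum_mul]
    _ = ∑ n, (∑ ℓ ∈ Finset.range (M + 1), R n ℓ) * Real.log (1 + f * t n / that) := by
        rw [Finset.sum_comm]
        exact Finset.sum_congr rfl (fun n _ => (Finset.sum_mul _ _ _).symm)
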